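/- The exponential generating function of the hierarchical-ordering numbers satisfies H(x) = exp(B(x) − 1), where B(x) is the exponential generating function of the ordered Bell numbers. Precisely, as formal power series over ℚ: ∑_{n≥0} (H_n/n!) x^n = exp( ∑_{n≥1} (B_n/n!) x^n ), noting that B(x) − 1 = ∑_{n≥1} (B_n/n!) x^n since B_0 = 1. -/

import Mathlib

open Finset PowerSeries Filter Nat

/-- `L` is an ordered set partition of the finite set `S`: a finite sequence of pairwise
disjoint nonempty subsets of `S` whose union is `S`. -/
def IsOrderedSetPartition {α : Type*} [DecidableEq α] (S : Finset α) (L : List (Finset α)) :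
    Prop :=
  (∀ T ∈ L, T ≠ ∅) ∧ L.Pairwise Disjoint ∧ L.foldr (· ∪ ·) ∅ = S

/-- The type of ordered set partitions of the finite set `S`. -/
def OrderedSetPartition {α : Type*} [DecidableEq α] (S : Finset α) :=
  {L : List (Finset α) // IsOrderedSetPartition S L}

/-- The ordered Bell number `B n`: the number of ordered set partitions of an `n`-element set. -/
noncomputable def orderedBell (n : ℕ) : ℕ :=
  Nat.card (OrderedSetPartition (Finset.univ : Finset (Fin n)))

/-- A hierarchical ordering (society) on the finite set `S`: an (unordered) set partition of `S`
into nonempty blocks, together with an ordered set partition of each block. -/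
def HierarchicalOrdering {α : Type*} [DecidableEq α] (S : Finset α) :=
  (P : Finpartition S) × ((b : P.parts) → OrderedSetPartition (b : Finset α))

/-- `H n`: the number of hierarchical orderings on an `n`-element set. -/
noncomputable def hier (n : ℕ) : ℕ :=
  Nat.card (HierarchicalOrdering (Finset.univ : Finset (Fin n)))

/-- The formal exponential `exp S` of a power series (intended for `S` with zero constant
term): its `n`-th coefficient is `∑_{k=0}^{n} [xⁿ] Sᵏ / k!`. -/
noncomputable def expComp (S : PowerSeries ℚ) : PowerSeries ℚ :=
  PowerSeries.mk fun n => ∑ k ∈ Finset.range (n + 1), PowerSeries.coeff n (S ^ k) / (k ! : ℚ)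


lemma coeff_pow_eq_zero {S : PowerSeries ℚ} (hS : constantCoeff S = 0) {k n : ℕ}
    (h : n < k) : coeff n (S ^ k) = 0 :=
  X_pow_dvd_iff.mp (pow_dvd_pow_of_dvd (X_dvd_iff.2 hS) k) n h

lemma coeff_expComp_zero (S : PowerSeries ℚ) : coeff 0 (expComp S) = 1 := by
  simp [expComp]

lemma coeff_expComp_rec {S : PowerSeries ℚ} (hS : constantCoeff S = 0) (n : ℕ) :
    (n + 1 : ℚ) * coeff (n + 1) (expComp S) =
      ∑ i ∈ range (n + 1), ((i + 1 : ℚ) * coeff (i + 1) S) * coeff (n - i) (expComp S) := by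
  set D := PowerSeries.derivative ℚ with hD
  have key : ∀ k : ℕ, (n + 1 : ℚ) * coeff (n + 1) (S ^ (k + 1)) =
      (k + 1 : ℚ) * coeff n (S ^ k * D S) := by
    intro k
    have h2 : D (S ^ (k + 1)) = (k + 1) • (S ^ k • D S) := by
      simpa using D.leibniz_pow S (k + 1)
    have h1 : coeff n (D (S ^ (k + 1))) = coeff (n + 1) (S ^ (k + 1)) * (n + 1) :=
      coeff_derivative _ n
    rw [h2, map_nsmul] at h1
    rw [mul_comm ((n : ℚ) + 1), ← h1]
    simp [smul_eq_mul]
  -- LHS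
  have hL : (n + 1 : ℚ) * coeff (n + 1) (expComp S) =
      ∑ k ∈ range (n + 1), coeff n (S ^ k * D S) / (k ! : ℚ) := by
    rw [expComp, coeff_mk, mul_sum, Finset.sum_range_succ']
    simp only [pow_zero]
    have h0 : (n + 1 : ℚ) * (coeff (n + 1) (1 : PowerSeries ℚ) / (0! : ℚ)) = 0 := by
      simp [coeff_one]
    rw [h0, add_zero]
    refine Finset.sum_congr rfl fun k _ => ?_
    rw [div_eq_mul_inv, ← mul_assoc, key k, Nat.factorial_succ]
    have hk : ((k : ℚ) + 1) ≠ 0 := by positivity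
    push_cast
    field_simp
  rw [hL]
  -- RHS
  have hR : ∀ i ∈ range (n + 1), ((i + 1 : ℚ) * coeff (i + 1) S) * coeff (n - i) (expComp S)
      = ∑ k ∈ range (n + 1), coeff i (D S) * coeff (n - i) (S ^ k) / (k ! : ℚ) := by
    intro i hi
    have hDc : coeff i (D S) = coeff (i + 1) S * (i + 1) := coeff_derivative _ i
    rw [hDc, expComp, coeff_mk, mul_comm ((i : ℚ) + 1), mul_sum]
    have hni : n - i + 1 ≤ n + 1 := by omega
    rw [← Finset.sum_subset (Finset.range_subset_range.2 hni) (fun k _ hk => ?_)]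
    · exact Finset.sum_congr rfl fun k _ => by ring
    · have : n - i < k := by simp only [Finset.mem_range, not_lt] at hk ⊢; omega
      rw [coeff_pow_eq_zero hS this]
      simp
  rw [Finset.sum_congr rfl hR, Finset.sum_comm]
  refine Finset.sum_congr rfl fun k _ => ?_
  rw [mul_comm (S ^ k) (D S), PowerSeries.coeff_mul, ← Finset.sum_div]
  rw [Finset.Nat.sum_antidiagonal_eq_sum_range_succ_mk]

section Basics

variable {α : Type*} {β : Type*} [DecidableEq α] [DecidableEq β]

lemma mem_foldr_union {L : List (Finset α)} {a : α} :
    a ∈ L.foldr (· ∪ ·) ∅ ↔ ∃ T ∈ L, a ∈ T := by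
  induction L with
  | nil => simp
  | cons T L ih => simp [ih]

lemma foldr_union_map (g : Finset α → Finset β) (hg : ∀ s t, g (s ∪ t) = g s ∪ g t)
    (hg0 : g ∅ = ∅) (L : List (Finset α)) :
    (L.map g).foldr (· ∪ ·) ∅ = g (L.foldr (· ∪ ·) ∅) := by
  induction L with
  | nil => simp [hg0]
  | cons T L ih => simp [ih, hg]

lemma subset_of_mem_osp {S : Finset α} {L : List (Finset α)} (h : IsOrderedSetPartition S L)
    {T : Finset α} (hT : T ∈ L) : T ⊆ S := by
  intro a ha
  rw [← h.2.2]
  exact mem_foldr_union.2 ⟨T, hT, ha⟩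

lemma isOSP_map (g : α ↪ β) {S : Finset α} {L : List (Finset α)}
    (h : IsOrderedSetPartition S L) :
    IsOrderedSetPartition (S.map g) (L.map (Finset.map g)) := by
  obtain ⟨h1, h2, h3⟩ := h
  refine ⟨?_, ?_, ?_⟩
  · intro T hT
    obtain ⟨U, hU, rfl⟩ := List.mem_map.1 hT
    simpa [Finset.map_eq_empty] using h1 U hU
  · exact h2.map _ (fun a b hab => (Finset.disjoint_map g).2 hab)
  · rw [foldr_union_map _ (fun s t => Finset.map_union s t) (Finset.map_empty g), h3]

lemma map_preimage_of_subset {g : α ↪ β} {S : Finset α} {T : Finset β} (hT : T ⊆ S.map g) :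
    (T.preimage g (g.injective.injOn)).map g = T := by
  ext b
  simp only [Finset.mem_map, Finset.mem_preimage]
  constructor
  · rintro ⟨a, ha, rfl⟩; exact ha
  · intro hb
    obtain ⟨a, _, rfl⟩ := Finset.mem_map.1 (hT hb)
    exact ⟨a, hb, rfl⟩

lemma isOSP_preimage (g : α ↪ β) {S : Finset α} {L : List (Finset β)}
    (h : IsOrderedSetPartition (S.map g) L) :
    IsOrderedSetPartition S (L.map (fun T => T.preimage g (g.injective.injOn))) := by
  obtain ⟨h1, h2, h3⟩ := h
  have hsub : ∀ T ∈ L, T ⊆ S.map g := fun T hT => subset_of_mem_osp ⟨h1, h2, h3⟩ hT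
  refine ⟨?_, ?_, ?_⟩
  · intro T hT
    obtain ⟨U, hU, rfl⟩ := List.mem_map.1 hT
    intro hemp
    apply h1 U hU
    have := map_preimage_of_subset (hsub U hU)
    rw [hemp, Finset.map_empty] at this
    exact this.symm
  · refine h2.map _ (fun a b hab => ?_)
    rw [Finset.disjoint_left] at hab ⊢
    intro c hc1 hc2
    exact hab (Finset.mem_preimage.1 hc1) (Finset.mem_preimage.1 hc2)
  · rw [foldr_union_map (fun T => T.preimage g (g.injective.injOn))
      (fun s t => by ext a; simp only [Finset.mem_union, Finset.mem_preimage]) (by ext a; simp), h3, Finset.preimage_map]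

/-- Transport of ordered set partitions along an embedding. -/
noncomputable def ospMapEquiv (g : α ↪ β) (S : Finset α) :
    OrderedSetPartition S ≃ OrderedSetPartition (S.map g) where
  toFun L := ⟨L.1.map (Finset.map g), isOSP_map g L.2⟩
  invFun L := ⟨L.1.map (fun T => T.preimage g (g.injective.injOn)), isOSP_preimage g L.2⟩
  left_inv L := by
    apply Subtype.ext
    simp only [List.map_map]
    refine (List.map_congr_left fun T hT => ?_).trans (List.map_id L.1)
    exact Finset.preimage_map g T
  right_inv L := by
    apply Subtype.ext
    simp only [List.map_map]
    refine (List.map_congr_left fun T hT => ?_).trans (List.map_id L.1)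
    exact map_preimage_of_subset (subset_of_mem_osp L.2 hT)

lemma card_osp_map (g : α ↪ β) (S : Finset α) (T : Finset β) (h : S.map g = T) :
    Nat.card (OrderedSetPartition T) = Nat.card (OrderedSetPartition S) := by
  subst h
  exact Nat.card_congr (ospMapEquiv g S).symm

lemma card_osp [Fintype α] (S : Finset α) :
    Nat.card (OrderedSetPartition S) = orderedBell S.card := by
  have e : (S : Type _) ≃ Fin S.card := by
    have : Fintype.card ↥S = S.card := Fintype.card_coe S
    exact Fintype.equivFinOfCardEq this
  have h1 : Nat.card (OrderedSetPartition S) =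
      Nat.card (OrderedSetPartition (Finset.univ : Finset ↥S)) :=
    card_osp_map (Function.Embedding.subtype _) Finset.univ S
      (by rw [Finset.univ_eq_attach, Finset.attach_map_val])
  have h2 : Nat.card (OrderedSetPartition (Finset.univ : Finset (Fin S.card))) =
      Nat.card (OrderedSetPartition (Finset.univ : Finset ↥S)) :=
    card_osp_map e.toEmbedding Finset.univ Finset.univ
      (by ext b; simp)
  rw [h1, orderedBell, h2]

lemma nodup_of_osp {S : Finset α} {L : List (Finset α)} (h : IsOrderedSetPartition S L) :
    L.Nodup := by
  have := h.2.1
  refine List.Pairwise.imp_of_mem ?_ this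
  intro a b ha _ hab
  intro hEq
  subst hEq
  have : a = ∅ := by simpa using disjoint_self.1 hab
  exact h.1 a ha this

instance ospFinite [Fintype α] (S : Finset α) : Finite (OrderedSetPartition S) := by
  set N := Fintype.card (Finset α) with hN
  have hlen : ∀ L : OrderedSetPartition S, L.1.length ≤ N :=
    fun L => (nodup_of_osp L.2).length_le_card
  refine Finite.of_injective (fun L : OrderedSetPartition S =>
    ((⟨L.1.length, Nat.lt_succ_of_le (hlen L)⟩ : Fin (N + 1)),
      fun i : Fin N => L.1.getD i ∅)) ?_
  rintro ⟨L1, h1⟩ ⟨L2, h2⟩ hEq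
  simp only [Prod.mk.injEq, Fin.mk.injEq] at hEq
  obtain ⟨hl, hf⟩ := hEq
  apply Subtype.ext
  apply List.ext_getElem hl
  intro i hi1 hi2
  have hiN : i < N := lt_of_lt_of_le hi1 (hlen ⟨L1, h1⟩)
  have h := congrFun hf ⟨i, hiN⟩
  simp only at h
  rwa [List.getD_eq_getElem _ _ hi1, List.getD_eq_getElem _ _ hi2] at h

instance fpFinite [Fintype α] (S : Finset α) : Finite (Finpartition S) :=
  Finite.of_injective (fun P => P.parts) (fun P Q h => Finpartition.ext h)

instance hoFinite [Fintype α] (S : Finset α) : Finite (HierarchicalOrdering S) := by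
  unfold HierarchicalOrdering
  infer_instance

noncomputable instance fpFintype [Fintype α] (S : Finset α) : Fintype (Finpartition S) :=
  Fintype.ofFinite _

lemma nat_card_sigma {ι : Type*} [Fintype ι] (f : ι → Type*) [∀ i, Finite (f i)] :
    Nat.card (Σ i, f i) = ∑ i, Nat.card (f i) := by
  letI := fun i => Fintype.ofFinite (f i)
  simp [Nat.card_eq_fintype_card, Fintype.card_sigma]

lemma card_ho_eq_sum [Fintype α] (S : Finset α) :
    Nat.card (HierarchicalOrdering S) =
      ∑ P : Finpartition S, ∏ t ∈ P.parts, orderedBell t.card := by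
  have h0 : Nat.card (HierarchicalOrdering S) =
      Nat.card ((P : Finpartition S) × ((b : P.parts) → OrderedSetPartition (b : Finset α))) :=
    rfl
  rw [h0, nat_card_sigma]
  refine Finset.sum_congr rfl fun P _ => ?_
  rw [Nat.card_pi]
  rw [← Finset.prod_attach P.parts (fun t => orderedBell t.card), Finset.univ_eq_attach]
  exact Finset.prod_congr rfl fun b _ => card_osp _

lemma sup_map_finset (s : Finset (Finset α)) (g : α ↪ β) :
    s.sup (fun t => Finset.map g t) = (s.sup id).map g := by
  induction s using Finset.induction_on with
  | empty => simp
  | insert _ _ _ ih => simp [Finset.sup_insert, ih, Finset.sup_eq_union, Finset.map_union]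

/-- Transport of finpartitions along an embedding. -/
noncomputable def finpartMapEquiv (g : α ↪ β) (S : Finset α) :
    Finpartition S ≃ Finpartition (S.map g) where
  toFun P :=
    { parts := P.parts.map (Finset.mapEmbedding g).toEmbedding
      supIndep := by
        rw [Finset.supIndep_iff_pairwiseDisjoint]
        intro x hx y hy hxy
        simp only [Finset.coe_map, Set.mem_image, Finset.mem_coe,
          Finset.mapEmbedding_apply] at hx hy
        obtain ⟨t, ht, rfl⟩ := hx
        obtain ⟨u, hu, rfl⟩ := hy
        simp only [RelEmbedding.coe_toEmbedding, Finset.mapEmbedding_apply] at hxy ⊢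
        have htu : t ≠ u := fun h => hxy (by rw [h])
        simpa [Function.onFun, Finset.disjoint_map] using P.disjoint ht hu htu
      sup_parts := by
        rw [Finset.sup_map]
        have : (fun t => Finset.map g t) = (id ∘ (Finset.mapEmbedding g).toEmbedding) := by
          funext t; rfl
        rw [← this, sup_map_finset, P.sup_parts]
      bot_notMem := by
        intro h
        obtain ⟨t, ht, hEq⟩ := Finset.mem_map.1 h
        have hEq' : t.map g = ⊥ := hEq
        have : t = ⊥ := by simpa [Finset.map_eq_empty] using hEq'
        exact P.bot_notMem (this ▸ ht) }
  invFun Q :=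
    { parts := Q.parts.image (fun T => T.preimage g (g.injective.injOn))
      supIndep := by
        rw [Finset.supIndep_iff_pairwiseDisjoint]
        intro x hx y hy hxy
        simp only [Finset.coe_image, Set.mem_image, Finset.mem_coe] at hx hy
        obtain ⟨T, hT, rfl⟩ := hx
        obtain ⟨U, hU, rfl⟩ := hy
        have hTU : T ≠ U := fun h => hxy (by rw [h])
        have := Q.disjoint hT hU hTU
        simp only [Function.onFun, id_eq] at this ⊢
        rw [Finset.disjoint_left] at this ⊢
        intro c hc1 hc2
        exact this (Finset.mem_preimage.1 hc1) (Finset.mem_preimage.1 hc2)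
      sup_parts := by
        ext a
        simp only [Finset.mem_sup, Finset.mem_image, id_eq]
        constructor
        · rintro ⟨_, ⟨T, hT, rfl⟩, ha⟩
          have : g a ∈ S.map g := Q.le hT (Finset.mem_preimage.1 ha)
          exact (Finset.mem_map' g).1 this
        · intro ha
          obtain ⟨T, hT, hgT⟩ := Q.exists_mem ((Finset.mem_map' g).2 ha)
          exact ⟨_, ⟨T, hT, rfl⟩, Finset.mem_preimage.2 hgT⟩
      bot_notMem := by
        intro h
        obtain ⟨T, hT, hEq⟩ := Finset.mem_image.1 h
        obtain ⟨b, hb⟩ := Q.nonempty_of_mem_parts hT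
        obtain ⟨a, _, rfl⟩ := Finset.mem_map.1 (Q.le hT hb)
        have : a ∈ T.preimage g (g.injective.injOn) := Finset.mem_preimage.2 hb
        rw [hEq] at this
        exact Finset.notMem_empty a this }
  left_inv P := by
    apply Finpartition.ext
    simp only
    rw [Finset.map_eq_image, Finset.image_image]
    refine (Finset.image_congr fun t _ => ?_).trans Finset.image_id
    simp only [Function.comp_apply, RelEmbedding.coe_toEmbedding, Finset.mapEmbedding_apply]
    exact Finset.preimage_map g t
  right_inv Q := by
    apply Finpartition.ext
    simp only
    rw [Finset.map_eq_image, Finset.image_image]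
    refine (Finset.image_congr fun T hT => ?_).trans Finset.image_id
    simp only [Function.comp_apply, RelEmbedding.coe_toEmbedding, Finset.mapEmbedding_apply]
    exact map_preimage_of_subset (Q.le hT)

lemma card_ho_map [Fintype α] [Fintype β] (g : α ↪ β) (S : Finset α) (T : Finset β)
    (h : S.map g = T) :
    Nat.card (HierarchicalOrdering T) = Nat.card (HierarchicalOrdering S) := by
  subst h
  rw [card_ho_eq_sum, card_ho_eq_sum]
  refine Fintype.sum_equiv (finpartMapEquiv g S).symm _ _ fun Q => ?_
  have hparts : ((finpartMapEquiv g S).symm Q).parts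
      = Q.parts.image (fun T => T.preimage g (g.injective.injOn)) := rfl
  rw [hparts, Finset.prod_image (fun T hT U hU h => by
    have h2 := congrArg (Finset.map g) h
    rwa [map_preimage_of_subset (Q.le hT), map_preimage_of_subset (Q.le hU)] at h2)]
  refine Finset.prod_congr rfl fun T hT => ?_
  have h3 : (T.preimage g (g.injective.injOn)).map g = T := map_preimage_of_subset (Q.le hT)
  conv_lhs => rw [← h3]
  rw [Finset.card_map]

lemma card_ho [Fintype α] (S : Finset α) :
    Nat.card (HierarchicalOrdering S) = hier S.card := by
  have e : (S : Type _) ≃ Fin S.card := Fintype.equivFinOfCardEq (Fintype.card_coe S)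
  have h1 : Nat.card (HierarchicalOrdering S) =
      Nat.card (HierarchicalOrdering (Finset.univ : Finset ↥S)) :=
    card_ho_map (Function.Embedding.subtype _) Finset.univ S
      (by rw [Finset.univ_eq_attach, Finset.attach_map_val])
  have h2 : Nat.card (HierarchicalOrdering (Finset.univ : Finset (Fin S.card))) =
      Nat.card (HierarchicalOrdering (Finset.univ : Finset ↥S)) :=
    card_ho_map e.toEmbedding Finset.univ Finset.univ (by ext b; simp)
  rw [h1, hier, h2]

/-- Remove a part from a finpartition. -/
def fpRestrict {S : Finset α} (P : Finpartition S) (B : Finset α) (hB : B ∈ P.parts) :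
    Finpartition (S \ B) where
  parts := P.parts.erase B
  supIndep := P.supIndep.subset (Finset.erase_subset _ _)
  sup_parts := by
    apply le_antisymm
    · refine Finset.sup_le fun t ht => ?_
      have ht' := Finset.mem_of_mem_erase ht
      exact Finset.subset_sdiff.2 ⟨P.le ht', P.disjoint ht' hB (Finset.ne_of_mem_erase ht)⟩
    · intro a ha
      rw [Finset.mem_sdiff] at ha
      obtain ⟨t, htp, hat⟩ := P.exists_mem ha.1
      have hne : t ≠ B := fun h => ha.2 (h ▸ hat)
      exact Finset.mem_sup.2 ⟨t, Finset.mem_erase.2 ⟨hne, htp⟩, hat⟩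
  bot_notMem := fun h => P.bot_notMem (Finset.mem_of_mem_erase h)

lemma notin_parts_of_fp_sdiff {S B : Finset α} (hx : ∃ x, x ∈ B) (Q : Finpartition (S \ B)) :
    B ∉ Q.parts := by
  intro h
  obtain ⟨x, hxB⟩ := hx
  have := Q.le h hxB
  rw [Finset.mem_sdiff] at this
  exact this.2 hxB

lemma part_extend {S B : Finset α} {x : α} (hxB : x ∈ B) (Q : Finpartition (S \ B))
    (hb : B ≠ ⊥) (hab : Disjoint (S \ B) B) (hc : (S \ B) ⊔ B = S) :
    (Q.extend hb hab hc).part x = B :=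
  Finpartition.part_eq_of_mem _
    (by rw [Finpartition.extend_parts]; exact Finset.mem_insert_self _ _) hxB

lemma erase_extend {S B : Finset α} {x : α} (hxB : x ∈ B) (Q : Finpartition (S \ B))
    (hb : B ≠ ⊥) (hab : Disjoint (S \ B) B) (hc : (S \ B) ⊔ B = S) :
    (Q.extend hb hab hc).parts.erase ((Q.extend hb hab hc).part x) = Q.parts := by
  rw [part_extend hxB, Finpartition.extend_parts,
    Finset.erase_insert (notin_parts_of_fp_sdiff ⟨x, hxB⟩ Q)]

lemma sigma_fp_eq {S : Finset α} {x : α} (B₁ B₂ : {B : Finset α // x ∈ B ∧ B ⊆ S})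
    (Q₁ : Finpartition (S \ B₁.1)) (Q₂ : Finpartition (S \ B₂.1))
    (hB : B₁.1 = B₂.1) (hQ : Q₁.parts = Q₂.parts) :
    (⟨B₁, Q₁⟩ : Σ B : {B : Finset α // x ∈ B ∧ B ⊆ S}, Finpartition (S \ B.1)) = ⟨B₂, Q₂⟩ := by
  rcases B₁ with ⟨B₁, h₁⟩
  rcases B₂ with ⟨B₂, h₂⟩
  subst hB
  have : Q₁ = Q₂ := Finpartition.ext hQ
  subst this
  rfl

/-- Decomposition of a finpartition by the part containing a given element. -/
noncomputable def partDecomp (S : Finset α) (x : α) (hx : x ∈ S) :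
    Finpartition S ≃ Σ B : {B : Finset α // x ∈ B ∧ B ⊆ S}, Finpartition (S \ B.1) where
  toFun P := ⟨⟨P.part x, P.mem_part hx, P.le (P.part_mem.2 hx)⟩,
    fpRestrict P (P.part x) (P.part_mem.2 hx)⟩
  invFun σ := σ.2.extend (b := σ.1.1)
    (by simpa [Finset.bot_eq_empty] using Finset.ne_empty_of_mem σ.1.2.1)
    (Finset.sdiff_disjoint)
    (by rw [Finset.sup_eq_union]; exact Finset.sdiff_union_of_subset σ.1.2.2)
  left_inv P := by
    apply Finpartition.ext
    show insert (P.part x) ((fpRestrict P (P.part x) (P.part_mem.2 hx)).parts) = P.parts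
    show insert (P.part x) (P.parts.erase (P.part x)) = P.parts
    exact Finset.insert_erase (P.part_mem.2 hx)
  right_inv := by
    rintro ⟨⟨B, hxB, hBS⟩, Q⟩
    exact sigma_fp_eq _ _ _ _ (part_extend hxB Q _ _ _) (erase_extend hxB Q _ _ _)

lemma hier_zero : hier 0 = 1 := by
  rw [hier, Nat.card_eq_one_iff_unique]
  have hparts : ∀ P : Finpartition (Finset.univ : Finset (Fin 0)), P.parts = ∅ := by
    intro P
    rw [Finset.eq_empty_iff_forall_notMem]
    intro t ht
    obtain ⟨a, _⟩ := P.nonempty_of_mem_parts ht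
    exact a.elim0
  constructor
  · constructor
    rintro ⟨P, f⟩ ⟨P', f'⟩
    have hPP : P = P' := Finpartition.ext ((hparts P).trans (hparts P').symm)
    subst hPP
    congr 1
    funext b
    exact ((Finset.isEmpty_coe_sort.2 (hparts P)).elim b)
  · refine ⟨⟨⟨∅, by simp, ?_, by simp⟩, fun b => absurd b.2 (Finset.notMem_empty _)⟩⟩
    simp [Finset.univ_eq_empty]

end Basics

lemma hier_rec (n : ℕ) :
    hier (n + 1) = ∑ j ∈ Finset.range (n + 1),
      n.choose j * (orderedBell (j + 1) * hier (n - j)) := by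
  classical
  set x : Fin (n + 1) := 0 with hxdef
  have h1 : hier (n + 1) = ∑ P : Finpartition (Finset.univ : Finset (Fin (n + 1))),
      ∏ t ∈ P.parts, orderedBell t.card := card_ho_eq_sum _
  set e := partDecomp (Finset.univ : Finset (Fin (n + 1))) x (Finset.mem_univ x) with hedef
  have h2 : ∑ P : Finpartition (Finset.univ : Finset (Fin (n + 1))),
        ∏ t ∈ P.parts, orderedBell t.card
      = ∑ σ : Σ B : {B : Finset (Fin (n + 1)) // x ∈ B ∧ B ⊆ Finset.univ},
          Finpartition (Finset.univ \ B.1),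
          orderedBell σ.1.1.card * ∏ t ∈ σ.2.parts, orderedBell t.card := by
    refine Fintype.sum_equiv e _ _ fun P => ?_
    have hins : P.parts = insert (P.part x) (P.parts.erase (P.part x)) :=
      (Finset.insert_erase (P.part_mem.2 (Finset.mem_univ x))).symm
    conv_lhs => rw [hins]
    rw [Finset.prod_insert (Finset.notMem_erase _ _)]
    rfl
  have h3 : ∑ σ : Σ B : {B : Finset (Fin (n + 1)) // x ∈ B ∧ B ⊆ Finset.univ},
          Finpartition (Finset.univ \ B.1),
          orderedBell σ.1.1.card * ∏ t ∈ σ.2.parts, orderedBell t.card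
      = ∑ B : {B : Finset (Fin (n + 1)) // x ∈ B ∧ B ⊆ Finset.univ},
          orderedBell B.1.card * hier ((n + 1) - B.1.card) := by
    rw [← Finset.univ_sigma_univ, Finset.sum_sigma]
    refine Finset.sum_congr rfl fun B _ => ?_
    dsimp only
    rw [← Finset.mul_sum]
    congr 1
    have := (card_ho_eq_sum (Finset.univ \ B.1)).symm
    rw [this, card_ho]
    congr 1
    rw [Finset.card_sdiff_of_subset (Finset.subset_univ _), Finset.card_univ, Fintype.card_fin]
  have h4 : ∑ B : {B : Finset (Fin (n + 1)) // x ∈ B ∧ B ⊆ Finset.univ},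
          orderedBell B.1.card * hier ((n + 1) - B.1.card)
      = ∑ B ∈ Finset.univ.filter (fun B : Finset (Fin (n + 1)) => x ∈ B),
          orderedBell B.card * hier ((n + 1) - B.card) :=
    (Finset.sum_subtype (Finset.univ.filter (fun B : Finset (Fin (n + 1)) => x ∈ B))
      (fun B => by simp) (fun B => orderedBell B.card * hier ((n + 1) - B.card))).symm
  have h5 : ∑ B ∈ Finset.univ.filter (fun B : Finset (Fin (n + 1)) => x ∈ B),
          orderedBell B.card * hier ((n + 1) - B.card)
      = ∑ t ∈ ((Finset.univ : Finset (Fin (n + 1))).erase x).powerset,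
          orderedBell (t.card + 1) * hier (n - t.card) := by
    refine Finset.sum_nbij' (fun B => B.erase x) (fun t => insert x t) ?_ ?_ ?_ ?_ ?_
    · intro B hB
      rw [Finset.mem_powerset]
      exact Finset.erase_subset_erase x (Finset.subset_univ B)
    · intro t ht
      simp only [Finset.mem_filter, Finset.mem_univ, true_and]
      exact Finset.mem_insert_self x t
    · intro B hB
      simp only [Finset.mem_filter] at hB
      exact Finset.insert_erase hB.2
    · intro t ht
      rw [Finset.mem_powerset] at ht
      exact Finset.erase_insert (fun hx => (Finset.mem_erase.1 (ht hx)).1 rfl)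
    · intro B hB
      simp only [Finset.mem_filter] at hB
      have hxB : x ∈ B := hB.2
      have hcard : (B.erase x).card + 1 = B.card := by
        rw [Finset.card_erase_of_mem hxB]
        have : 1 ≤ B.card := Finset.card_pos.2 ⟨x, hxB⟩
        omega
      rw [hcard]
      congr 2
      omega
  have h6 : ∑ t ∈ ((Finset.univ : Finset (Fin (n + 1))).erase x).powerset,
          orderedBell (t.card + 1) * hier (n - t.card)
      = ∑ j ∈ Finset.range (n + 1), n.choose j * (orderedBell (j + 1) * hier (n - j)) := by
    have hcard : ((Finset.univ : Finset (Fin (n + 1))).erase x).card = n := by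
      rw [Finset.card_erase_of_mem (Finset.mem_univ x), Finset.card_univ, Fintype.card_fin]
      omega
    rw [Finset.sum_powerset, hcard]
    refine Finset.sum_congr rfl fun j hj => ?_
    have : ∀ t ∈ Finset.powersetCard j ((Finset.univ : Finset (Fin (n + 1))).erase x),
        orderedBell (t.card + 1) * hier (n - t.card)
          = orderedBell (j + 1) * hier (n - j) := by
      intro t ht
      rw [(Finset.mem_powersetCard.1 ht).2]
    rw [Finset.sum_congr rfl this, Finset.sum_const, Finset.card_powersetCard, hcard,
      smul_eq_mul]
  rw [h1, h2, h3, h4, h5, h6]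

/-- **Theorem 1 (labeled case).** The exponential generating function of the
hierarchical-ordering numbers satisfies `H(x) = exp(B(x) − 1)`, i.e.
`∑_{n≥0} (H_n/n!) xⁿ = exp( ∑_{n≥1} (B_n/n!) xⁿ )` as formal power series over `ℚ`. -/
theorem egf_hier_eq_exp_orderedBell :
    (PowerSeries.mk fun n => (hier n : ℚ) / (n ! : ℚ)) =
      expComp (PowerSeries.mk fun n => if n = 0 then 0 else (orderedBell n : ℚ) / (n ! : ℚ)) := by
  set S : PowerSeries ℚ :=
    PowerSeries.mk fun n => if n = 0 then 0 else (orderedBell n : ℚ) / (n ! : ℚ) with hSdef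
  have hS : constantCoeff S = 0 := by
    rw [hSdef, ← coeff_zero_eq_constantCoeff_apply, coeff_mk]
    simp
  ext n
  rw [coeff_mk]
  induction n using Nat.strong_induction_on with
  | _ n ih =>
    obtain _ | m := n
    · rw [coeff_expComp_zero]
      rw [hier_zero]
      norm_num
    · have hrec := coeff_expComp_rec hS m
      have hcoeffS : ∀ i : ℕ, coeff (i + 1) S
          = (orderedBell (i + 1) : ℚ) / ((i + 1)! : ℚ) := by
        intro i
        rw [hSdef, coeff_mk]
        simp
      have hm1 : ((m : ℚ) + 1) ≠ 0 := by positivity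
      have hmfact : (m ! : ℚ) ≠ 0 := Nat.cast_ne_zero.2 (Nat.factorial_ne_zero _)
      have hf : (((m + 1)! : ℕ) : ℚ) = ((m : ℚ) + 1) * (m ! : ℚ) := by
        rw [Nat.factorial_succ]; push_cast; ring
      have step1 : ∑ i ∈ range (m + 1),
            (((i : ℚ) + 1) * coeff (i + 1) S) * coeff (m - i) (expComp S)
          = ∑ i ∈ range (m + 1),
            ((m.choose i : ℚ) * ((orderedBell (i + 1) : ℚ) * (hier (m - i) : ℚ))) / (m ! : ℚ) := by
        refine Finset.sum_congr rfl fun i hi => ?_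
        have hi' : i ≤ m := by
          have := Finset.mem_range.1 hi
          omega
        rw [hcoeffS i, ← ih (m - i) (by omega)]
        rw [Nat.cast_choose ℚ hi']
        have h1 : (((i + 1)! : ℕ) : ℚ) = ((i : ℚ) + 1) * (i ! : ℚ) := by
          rw [Nat.factorial_succ]; push_cast; ring
        rw [h1]
        have h2 : (i ! : ℚ) ≠ 0 := Nat.cast_ne_zero.2 (Nat.factorial_ne_zero _)
        have h3 : (((m - i)! : ℕ) : ℚ) ≠ 0 := Nat.cast_ne_zero.2 (Nat.factorial_ne_zero _)
        field_simp
      apply mul_left_cancel₀ hm1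
      rw [hrec, step1]
      rw [hf]
      rw [← Finset.sum_div]
      have hsum : ∑ i ∈ range (m + 1),
          ((m.choose i : ℚ) * ((orderedBell (i + 1) : ℚ) * (hier (m - i) : ℚ)))
            = (hier (m + 1) : ℚ) := by
        rw [hier_rec m]
        push_cast
        rfl
      rw [hsum]
      field_simp
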